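/- For any positive integers d and s, the number of d-th order twin-free subsets of {1, ..., s−1} equals the number of compositions of s + d − 1 into parts each of size 1 or d+1 (ordered sequences of parts from {1, d+1} summing to s + d − 1). -/

import Mathlib

/-- A finite set of naturals is `d`-th order twin-free:
any two distinct elements differ by more than `d`. -/
def TwinFree (d : ℕ) (β : Finset ℕ) : Prop :=
  ∀ x ∈ β, ∀ y ∈ β, x ≠ y → d < max x y - min x y

instance (d : ℕ) : DecidablePred (TwinFree d) := fun β => by
  unfold TwinFree; infer_instance


/-- `N1 d t = N_{d,1}(t)`: the number of `d`-th order twin-free subsets of `{1, …, t−1}`. -/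
def N1 (d t : ℕ) : ℕ := ((Finset.Icc 1 (t - 1)).powerset.filter (TwinFree d)).card

/-- Extension of `N_{d,1}` to integer arguments, with value `1` for `t ≤ 0`. -/
def N1ext (d : ℕ) (t : ℤ) : ℕ := if t ≤ 0 then 1 else N1 d t.toNat

/-- Auxiliary: the set of `{1, d+1}`-restricted compositions of `n`. -/
def Cset (d n : ℕ) : Set (List ℕ) :=
  {l : List ℕ | (∀ p ∈ l, p = 1 ∨ p = d + 1) ∧ l.sum = n}

lemma cset_zero (d : ℕ) : Cset d 0 = {([] : List ℕ)} := by
  ext l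
  constructor
  · rintro ⟨h1, h2⟩
    cases l with
    | nil => rfl
    | cons a t =>
      have ha := h1 a (by simp)
      simp only [List.sum_cons] at h2
      omega
  · rintro rfl; exact ⟨by simp, rfl⟩

lemma cset_finite (d n : ℕ) : (Cset d n).Finite := by
  induction n using Nat.strong_induction_on with
  | _ n ih =>
    rcases Nat.eq_zero_or_pos n with rfl | hn
    · rw [cset_zero]; exact Set.finite_singleton _
    · have hsub : Cset d n ⊆
          (List.cons 1 '' Cset d (n - 1)) ∪ (List.cons (d + 1) '' Cset d (n - d - 1)) := by
        rintro l ⟨h1, h2⟩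
        cases l with
        | nil => simp at h2; omega
        | cons a t =>
          have ha := h1 a (by simp)
          have ht : ∀ p ∈ t, p = 1 ∨ p = d + 1 := fun p hp => h1 p (by simp [hp])
          simp only [List.sum_cons] at h2
          rcases ha with rfl | rfl
          · left; exact ⟨t, ⟨ht, by omega⟩, rfl⟩
          · right; exact ⟨t, ⟨ht, by omega⟩, rfl⟩
      refine Set.Finite.subset (Set.Finite.union ?_ ?_) hsub
      · exact Set.Finite.image _ (ih (n - 1) (by omega))
      · exact Set.Finite.image _ (ih (n - d - 1) (by omega))

lemma all_ones (l : List ℕ) (h : ∀ p ∈ l, p = 1) : l = List.replicate l.sum 1 := by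
  induction l with
  | nil => simp
  | cons a t ih =>
    have ha := h a (by simp)
    subst ha
    rw [List.sum_cons, ih (fun p hp => h p (by simp [hp]))]
    simp [List.replicate_succ, Nat.add_comm]

lemma cset_small (d : ℕ) {n : ℕ} (h : n < d + 1) : Cset d n = {List.replicate n 1} := by
  ext l
  simp only [Cset, Set.mem_setOf_eq, Set.mem_singleton_iff]
  constructor
  · rintro ⟨h1, rfl⟩
    have hall : ∀ p ∈ l, p = 1 := by
      intro p hp
      rcases h1 p hp with h' | h'
      · exact h'
      · exfalso
        have hle : p ≤ l.sum := List.single_le_sum (fun x _ => Nat.zero_le x) p hp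
        omega
    exact all_ones l hall
  · rintro rfl
    refine ⟨fun p hp => Or.inl (List.eq_of_mem_replicate hp), by simp⟩

lemma cset_small_ncard (d : ℕ) {n : ℕ} (h : n < d + 1) : (Cset d n).ncard = 1 := by
  rw [cset_small d h, Set.ncard_singleton]

lemma cset_rec (d : ℕ) (hd : 0 < d) {n : ℕ} (hn : d + 1 ≤ n) :
    (Cset d n).ncard = (Cset d (n - 1)).ncard + (Cset d (n - d - 1)).ncard := by
  have hdecomp : Cset d n =
      (List.cons 1 '' Cset d (n - 1)) ∪ (List.cons (d + 1) '' Cset d (n - d - 1)) := by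
    ext l
    constructor
    · rintro ⟨h1, h2⟩
      cases l with
      | nil => simp at h2; omega
      | cons a t =>
        have ha := h1 a (by simp)
        have ht : ∀ p ∈ t, p = 1 ∨ p = d + 1 := fun p hp => h1 p (by simp [hp])
        simp only [List.sum_cons] at h2
        rcases ha with rfl | rfl
        · left; exact ⟨t, ⟨ht, by omega⟩, rfl⟩
        · right; exact ⟨t, ⟨ht, by omega⟩, rfl⟩
    · rintro (⟨t, ⟨ht1, ht2⟩, rfl⟩ | ⟨t, ⟨ht1, ht2⟩, rfl⟩)
      · refine ⟨?_, ?_⟩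
        · intro p hp
          rcases List.mem_cons.1 hp with rfl | hp'
          · exact Or.inl rfl
          · exact ht1 p hp'
        · simp only [List.sum_cons]; omega
      · refine ⟨?_, ?_⟩
        · intro p hp
          rcases List.mem_cons.1 hp with rfl | hp'
          · exact Or.inr rfl
          · exact ht1 p hp'
        · simp only [List.sum_cons]; omega
  rw [hdecomp, Set.ncard_union_eq ?_ ?_ ?_,
    Set.ncard_image_of_injective _ (List.cons_injective),
    Set.ncard_image_of_injective _ (List.cons_injective)]
  · rw [Set.disjoint_left]
    rintro l ⟨t, _, rfl⟩ ⟨t', _, heq⟩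
    obtain ⟨h', -⟩ := List.cons_eq_cons.1 heq
    omega
  · exact Set.Finite.image _ (cset_finite d _)
  · exact Set.Finite.image _ (cset_finite d _)

lemma twinfree_subset {d : ℕ} {β γ : Finset ℕ} (h : TwinFree d β) (hsub : γ ⊆ β) :
    TwinFree d γ :=
  fun x hx y hy hxy => h x (hsub hx) y (hsub hy) hxy

lemma N1_rec (d : ℕ) {s : ℕ} (hs : 2 ≤ s) :
    N1 d s = N1 d (s - 1) + N1 d (s - 1 - d) := by
  classical
  unfold N1
  set F := (Finset.Icc 1 (s - 1)).powerset.filter (TwinFree d) with hF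
  have hsplit := Finset.card_filter_add_card_filter_not
    (s := F) (p := fun β => (s - 1) ∈ β)
  rw [← hsplit]
  have h1 : (F.filter fun β => ¬ (s - 1) ∈ β) =
      (Finset.Icc 1 (s - 1 - 1)).powerset.filter (TwinFree d) := by
    ext β
    simp only [hF, Finset.mem_filter, Finset.mem_powerset]
    constructor
    · rintro ⟨⟨hsub, htf⟩, hnot⟩
      refine ⟨fun x hx => ?_, htf⟩
      have := hsub hx
      simp only [Finset.mem_Icc] at this ⊢
      have : x ≠ s - 1 := fun h => hnot (h ▸ hx)
      have h2 := hsub hx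
      simp only [Finset.mem_Icc] at h2
      omega
    · rintro ⟨hsub, htf⟩
      refine ⟨⟨fun x hx => ?_, htf⟩, fun hmem => ?_⟩
      · have := hsub hx
        simp only [Finset.mem_Icc] at this ⊢
        omega
      · have := hsub hmem
        simp only [Finset.mem_Icc] at this
        omega
  have h2 : (F.filter fun β => (s - 1) ∈ β).card =
      ((Finset.Icc 1 (s - 1 - d - 1)).powerset.filter (TwinFree d)).card := by
    refine Finset.card_nbij' (fun β => β.erase (s - 1)) (fun γ => insert (s - 1) γ)
      ?_ ?_ ?_ ?_
    · intro β hβ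
      simp only [hF, Finset.mem_coe, Finset.mem_filter, Finset.mem_powerset] at hβ ⊢
      obtain ⟨⟨hsub, htf⟩, hmem⟩ := hβ
      refine ⟨fun x hx => ?_, twinfree_subset htf (Finset.erase_subset _ _)⟩
      have hxβ := Finset.mem_of_mem_erase hx
      have hxne := Finset.ne_of_mem_erase hx
      have hxI := hsub hxβ
      simp only [Finset.mem_Icc] at hxI ⊢
      have hlt : x < s - 1 := by omega
      have htw := htf x hxβ (s - 1) hmem hxne
      rw [max_eq_right (le_of_lt hlt), min_eq_left (le_of_lt hlt)] at htw
      omega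
    · intro γ hγ
      simp only [hF, Finset.mem_coe, Finset.mem_filter, Finset.mem_powerset] at hγ ⊢
      obtain ⟨hsub, htf⟩ := hγ
      have hnotmem : (s - 1) ∉ γ := by
        intro h
        have := hsub h
        simp only [Finset.mem_Icc] at this
        omega
      refine ⟨⟨?_, ?_⟩, Finset.mem_insert_self _ _⟩
      · intro x hx
        rcases Finset.mem_insert.1 hx with rfl | hx'
        · simp only [Finset.mem_Icc]; omega
        · have := hsub hx'
          simp only [Finset.mem_Icc] at this ⊢
          omega
      · intro x hx y hy hxy
        rcases Finset.mem_insert.1 hx with rfl | hx' <;>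
          rcases Finset.mem_insert.1 hy with rfl | hy'
        · exact absurd rfl hxy
        · have := hsub hy'
          simp only [Finset.mem_Icc] at this
          have hlt : y < s - 1 := by omega
          rw [max_eq_left (le_of_lt hlt), min_eq_right (le_of_lt hlt)]
          omega
        · have := hsub hx'
          simp only [Finset.mem_Icc] at this
          have hlt : x < s - 1 := by omega
          rw [max_eq_right (le_of_lt hlt), min_eq_left (le_of_lt hlt)]
          omega
        · exact htf x hx' y hy' hxy
    · intro β hβ
      simp only [hF, Finset.mem_coe, Finset.mem_filter] at hβ
      exact Finset.insert_erase hβ.2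
    · intro γ hγ
      simp only [Finset.mem_coe, Finset.mem_filter, Finset.mem_powerset] at hγ
      refine Finset.erase_insert ?_
      intro h
      have := hγ.1 h
      simp only [Finset.mem_Icc] at this
      omega
  rw [h1, h2]
  ring

lemma main_lemma (d : ℕ) (hd : 0 < d) :
    ∀ s, 1 ≤ s → N1 d s = (Cset d (s + d - 1)).ncard := by
  intro s
  induction s using Nat.strong_induction_on with
  | _ s ih =>
    intro hs
    rcases Nat.lt_or_ge s 2 with hs2 | hs2
    · -- s = 1
      have hseq : s = 1 := by omega
      subst hseq
      have hN : N1 d 1 = 1 := by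
        have he : Finset.Icc 1 (1 - 1) = (∅ : Finset ℕ) := by decide
        have htf : TwinFree d ∅ := by intro x hx; simp at hx
        rw [N1, he, Finset.powerset_empty, Finset.filter_singleton, if_pos htf,
          Finset.card_singleton]
      rw [hN, cset_small_ncard d (by omega)]
    · rw [N1_rec d hs2]
      have hA : N1 d (s - 1) = (Cset d (s + d - 2)).ncard := by
        have heq : s - 1 + d - 1 = s + d - 2 := by omega
        rw [ih (s - 1) (by omega) (by omega), heq]
      have hB : N1 d (s - 1 - d) = (Cset d (s - 2)).ncard := by
        rcases Nat.lt_or_ge (s - 1 - d) 1 with hc | hc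
        · have h0 : s - 1 - d = 0 := by omega
          rw [h0]
          have hN : N1 d 0 = 1 := by
            have he : Finset.Icc 1 (0 - 1) = (∅ : Finset ℕ) := by decide
            have htf : TwinFree d ∅ := by intro x hx; simp at hx
            rw [N1, he, Finset.powerset_empty, Finset.filter_singleton, if_pos htf,
              Finset.card_singleton]
          rw [hN, cset_small_ncard d (by omega)]
        · have heq : s - 1 - d + d - 1 = s - 2 := by omega
          rw [ih (s - 1 - d) (by omega) hc, heq]
      rw [hA, hB]
      have hrec := cset_rec d hd (n := s + d - 1) (by omega)
      have e1 : s + d - 1 - 1 = s + d - 2 := by omega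
      have e2 : s + d - 1 - d - 1 = s - 2 := by omega
      rw [hrec, e1, e2]

theorem N1_eq_restricted_compositions (d s : ℕ) (hd : 0 < d) (hs : 0 < s) :
    N1 d s =
      {l : List ℕ | (∀ p ∈ l, p = 1 ∨ p = d + 1) ∧ l.sum = s + d - 1}.ncard := by
  exact main_lemma d hd s hs
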